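/- The A₁-type Macdonald polynomials satisfy the three-term recurrence: (x + x⁻¹)·M_n(x; q, t) = M_{n+1}(x; q, t) + ((1 − q^{2n})(1 − q^{2n−2} t⁴))/((1 − q^{2n−2} t²)(1 − q^{2n} t²)) · M_{n−1}(x; q, t) for n ≥ 1. -/

import Mathlib

/-- The finite q-Pochhammer symbol `(a;q)_n = ∏_{j=0}^{n-1} (1 − a q^j)`. -/
noncomputable def qPoch (a q : ℂ) (n : ℕ) : ℂ := ∏ j ∈ Finset.range n, (1 - a * q ^ j)

/-- The `A₁`-type Macdonald polynomial. -/
noncomputable def macdonaldA1 (n : ℕ) (x q t : ℂ) : ℂ :=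
  qPoch (q ^ 2) (q ^ 2) n / qPoch (t ^ 2) (q ^ 2) n *
    ∑ j ∈ Finset.range (n + 1),
      qPoch (t ^ 2) (q ^ 2) j * qPoch (t ^ 2) (q ^ 2) (n - j) /
          (qPoch (q ^ 2) (q ^ 2) j * qPoch (q ^ 2) (q ^ 2) (n - j)) *
        x ^ ((j : ℤ) - ((n : ℤ) - (j : ℤ)))

noncomputable def mA (q t : ℂ) (n : ℕ) : ℂ :=
  qPoch (q ^ 2) (q ^ 2) n / qPoch (t ^ 2) (q ^ 2) n

noncomputable def mcoef (q t : ℂ) (n j : ℕ) : ℂ :=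
  qPoch (t ^ 2) (q ^ 2) j * qPoch (t ^ 2) (q ^ 2) (n - j) /
    (qPoch (q ^ 2) (q ^ 2) j * qPoch (q ^ 2) (q ^ 2) (n - j))

lemma qPoch_succ (a q : ℂ) (n : ℕ) :
    qPoch a q (n + 1) = qPoch a q n * (1 - a * q ^ n) :=
  Finset.prod_range_succ _ _


set_option maxHeartbeats 1000000 in
lemma keylemma (q t A B Pm Pd Pl Qm Qd Ql : ℂ)
    (hPl : Pl ≠ 0) (hQm : Qm ≠ 0) (hQd : Qd ≠ 0)
    (hfm : 1 - q ^ 2 * A ≠ 0) (hfd : 1 - q ^ 2 * B ≠ 0)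
    (hft1 : 1 - t ^ 2 * (A * B) ≠ 0) (hft2 : 1 - t ^ 2 * (A * B * q ^ 2) ≠ 0) :
    Ql * (1 - q ^ 2 * (A * B)) / (Pl * (1 - t ^ 2 * (A * B))) *
        (Pm * (Pd * (1 - t ^ 2 * B)) / (Qm * (Qd * (1 - q ^ 2 * B)))) +
      Ql * (1 - q ^ 2 * (A * B)) / (Pl * (1 - t ^ 2 * (A * B))) *
        (Pm * (1 - t ^ 2 * A) * Pd / (Qm * (1 - q ^ 2 * A) * Qd)) =
    Ql * (1 - q ^ 2 * (A * B)) * (1 - q ^ 2 * (A * B * q ^ 2)) /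
        (Pl * (1 - t ^ 2 * (A * B)) * (1 - t ^ 2 * (A * B * q ^ 2))) *
        (Pm * (1 - t ^ 2 * A) * (Pd * (1 - t ^ 2 * B)) /
          (Qm * (1 - q ^ 2 * A) * (Qd * (1 - q ^ 2 * B)))) +
      (1 - A * B * q ^ 2) * (1 - A * B * t ^ 4) /
          ((1 - A * B * t ^ 2) * (1 - A * B * q ^ 2 * t ^ 2)) *
        (Ql / Pl * (Pm * Pd / (Qm * Qd))) := by
  have hR1 : (1 : ℂ) - A * B * t ^ 2 ≠ 0 := by
    intro hc; exact hft1 (by linear_combination hc)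
  have hR2 : (1 : ℂ) - A * B * q ^ 2 * t ^ 2 ≠ 0 := by
    intro hc; exact hft2 (by linear_combination hc)
  have hD1 : Pl * (1 - t ^ 2 * (A * B)) * (Qm * (Qd * (1 - q ^ 2 * B))) ≠ 0 :=
    mul_ne_zero (mul_ne_zero hPl hft1) (mul_ne_zero hQm (mul_ne_zero hQd hfd))
  have hD2 : Pl * (1 - t ^ 2 * (A * B)) * (Qm * (1 - q ^ 2 * A) * Qd) ≠ 0 :=
    mul_ne_zero (mul_ne_zero hPl hft1) (mul_ne_zero (mul_ne_zero hQm hfm) hQd)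
  have hD3 : Pl * (1 - t ^ 2 * (A * B)) * (1 - t ^ 2 * (A * B * q ^ 2)) *
      (Qm * (1 - q ^ 2 * A) * (Qd * (1 - q ^ 2 * B))) ≠ 0 :=
    mul_ne_zero (mul_ne_zero (mul_ne_zero hPl hft1) hft2)
      (mul_ne_zero (mul_ne_zero hQm hfm) (mul_ne_zero hQd hfd))
  have hD4 : (1 - A * B * t ^ 2) * (1 - A * B * q ^ 2 * t ^ 2) * (Pl * (Qm * Qd)) ≠ 0 :=
    mul_ne_zero (mul_ne_zero hR1 hR2) (mul_ne_zero hPl (mul_ne_zero hQm hQd))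
  simp only [div_mul_div_comm]
  rw [div_add_div _ _ hD1 hD2, div_add_div _ _ hD3 hD4,
    div_eq_div_iff (mul_ne_zero hD1 hD2) (mul_ne_zero hD3 hD4)]
  ring

set_option maxHeartbeats 400000 in
lemma midc (q t : ℂ) (m d : ℕ)
    (hqp : ∀ k : ℕ, qPoch (q ^ 2) (q ^ 2) k ≠ 0)
    (htp : ∀ k : ℕ, qPoch (t ^ 2) (q ^ 2) k ≠ 0) :
    mA q t (m + d + 1) * mcoef q t (m + d + 1) m
        + mA q t (m + d + 1) * mcoef q t (m + d + 1) (m + 1)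
      = mA q t (m + d + 1 + 1) * mcoef q t (m + d + 1 + 1) (m + 1)
        + (1 - q ^ (2 * (m + d) + 2)) * (1 - q ^ (2 * (m + d)) * t ^ 4) /
            ((1 - q ^ (2 * (m + d)) * t ^ 2) * (1 - q ^ (2 * (m + d) + 2) * t ^ 2)) *
          (mA q t (m + d) * mcoef q t (m + d) m) := by
  have hQm := hqp m
  have hQd := hqp d
  have hPl := htp (m + d)
  have hfm : (1 : ℂ) - q ^ 2 * (q ^ 2) ^ m ≠ 0 := by
    have h := hqp (m + 1); rw [qPoch_succ] at h; exact right_ne_zero_of_mul h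
  have hfd : (1 : ℂ) - q ^ 2 * (q ^ 2) ^ d ≠ 0 := by
    have h := hqp (d + 1); rw [qPoch_succ] at h; exact right_ne_zero_of_mul h
  have hft1 : (1 : ℂ) - t ^ 2 * (q ^ 2) ^ (m + d) ≠ 0 := by
    have h := htp (m + d + 1); rw [qPoch_succ] at h; exact right_ne_zero_of_mul h
  have hft2 : (1 : ℂ) - t ^ 2 * (q ^ 2) ^ (m + d + 1) ≠ 0 := by
    have h := htp (m + d + 1 + 1); rw [qPoch_succ] at h; exact right_ne_zero_of_mul h
  unfold mA mcoef
  rw [show m + d + 1 - m = d + 1 by omega, show m + d + 1 - (m + 1) = d by omega,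
      show m + d + 1 + 1 - (m + 1) = d + 1 by omega, show m + d - m = d by omega,
      qPoch_succ (q ^ 2) (q ^ 2) (m + d + 1), qPoch_succ (t ^ 2) (q ^ 2) (m + d + 1),
      qPoch_succ (q ^ 2) (q ^ 2) (m + d), qPoch_succ (t ^ 2) (q ^ 2) (m + d),
      qPoch_succ (q ^ 2) (q ^ 2) m, qPoch_succ (t ^ 2) (q ^ 2) m,
      qPoch_succ (q ^ 2) (q ^ 2) d, qPoch_succ (t ^ 2) (q ^ 2) d]
  rw [show ((q : ℂ) ^ 2) ^ (m + d + 1) = (q ^ 2) ^ m * (q ^ 2) ^ d * q ^ 2 from by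
        rw [pow_add, pow_add, pow_one],
      show ((q : ℂ) ^ 2) ^ (m + d) = (q ^ 2) ^ m * (q ^ 2) ^ d from pow_add _ m d,
      show (q : ℂ) ^ (2 * (m + d) + 2) = (q ^ 2) ^ m * (q ^ 2) ^ d * q ^ 2 from by
        rw [pow_add, pow_mul, pow_add],
      show (q : ℂ) ^ (2 * (m + d)) = (q ^ 2) ^ m * (q ^ 2) ^ d from by
        rw [pow_mul, pow_add]] 
  rw [show ((q : ℂ) ^ 2) ^ (m + d + 1) = (q ^ 2) ^ m * (q ^ 2) ^ d * q ^ 2 from by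
        rw [pow_add, pow_add, pow_one]] at hft2
  rw [show ((q : ℂ) ^ 2) ^ (m + d) = (q ^ 2) ^ m * (q ^ 2) ^ d from pow_add _ m d] at hft1
  exact keylemma q t ((q ^ 2) ^ m) ((q ^ 2) ^ d) (qPoch (t ^ 2) (q ^ 2) m)
    (qPoch (t ^ 2) (q ^ 2) d) (qPoch (t ^ 2) (q ^ 2) (m + d)) (qPoch (q ^ 2) (q ^ 2) m)
    (qPoch (q ^ 2) (q ^ 2) d) (qPoch (q ^ 2) (q ^ 2) (m + d)) hPl hQm hQd hfm hfd hft1 hft2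

lemma qPoch_zero (a q : ℂ) : qPoch a q 0 = 1 :=
  Finset.prod_range_zero _

lemma macdonaldA1_eq (n : ℕ) (x q t : ℂ) :
    macdonaldA1 n x q t
      = mA q t n * ∑ j ∈ Finset.range (n + 1), mcoef q t n j * x ^ (2 * (j : ℤ) - (n : ℤ)) := by
  unfold macdonaldA1 mA mcoef
  congr 1
  refine Finset.sum_congr rfl fun j hj => ?_
  rw [show (j : ℤ) - ((n : ℤ) - (j : ℤ)) = 2 * (j : ℤ) - (n : ℤ) from by ring]

lemma bdry0 (q t : ℂ) (n : ℕ) (h1 : qPoch (q ^ 2) (q ^ 2) n ≠ 0)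
    (h2 : qPoch (t ^ 2) (q ^ 2) n ≠ 0) :
    mA q t n * mcoef q t n 0 = 1 := by
  unfold mA mcoef
  rw [Nat.sub_zero]
  simp only [qPoch_zero]
  field_simp

lemma bdryn (q t : ℂ) (n : ℕ) (h1 : qPoch (q ^ 2) (q ^ 2) n ≠ 0)
    (h2 : qPoch (t ^ 2) (q ^ 2) n ≠ 0) :
    mA q t n * mcoef q t n n = 1 := by
  unfold mA mcoef
  rw [Nat.sub_self]
  simp only [qPoch_zero]
  field_simp

/-- Three-term recurrence for the `A₁`-type Macdonald polynomials, `n ≥ 1`, generic `q, t`: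
`(x + x⁻¹)·M_n = M_{n+1} + ((1 − q^{2n})(1 − q^{2n−2}t⁴))/((1 − q^{2n−2}t²)(1 − q^{2n}t²))·M_{n−1}`. -/
theorem macdonaldA1_three_term (n : ℕ) (hn : 1 ≤ n) (x q t : ℂ) (hx0 : x ≠ 0)
    (hq0 : q ≠ 0) (ht0 : t ≠ 0)
    (hqp : ∀ m : ℕ, qPoch (q ^ 2) (q ^ 2) m ≠ 0)
    (htp : ∀ m : ℕ, qPoch (t ^ 2) (q ^ 2) m ≠ 0)
    (hd1 : 1 - q ^ (2 * n - 2) * t ^ 2 ≠ 0)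
    (hd2 : 1 - q ^ (2 * n) * t ^ 2 ≠ 0) :
    (x + x⁻¹) * macdonaldA1 n x q t =
      macdonaldA1 (n + 1) x q t +
        (1 - q ^ (2 * n)) * (1 - q ^ (2 * n - 2) * t ^ 4) /
            ((1 - q ^ (2 * n - 2) * t ^ 2) * (1 - q ^ (2 * n) * t ^ 2)) *
          macdonaldA1 (n - 1) x q t := by
  obtain ⟨l, rfl⟩ : ∃ l, n = l + 1 := ⟨n - 1, by omega⟩
  have hx' : ∀ e : ℤ, (x + x⁻¹) * x ^ e = x ^ (e + 1) + x ^ (e - 1) := by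
    intro e; rw [zpow_add_one₀ hx0, zpow_sub_one₀ hx0]; ring
  rw [show 2 * (l + 1) - 2 = 2 * l from by omega, show 2 * (l + 1) = 2 * l + 2 from by omega,
      Nat.add_sub_cancel, macdonaldA1_eq, macdonaldA1_eq, macdonaldA1_eq]
  simp only [Finset.mul_sum]
  have hlhs :
      (∑ j ∈ Finset.range (l + 1 + 1),
          (x + x⁻¹) * (mA q t (l + 1) * (mcoef q t (l + 1) j * x ^ (2 * (j : ℤ) - ((l + 1 : ℕ) : ℤ)))))
        = (∑ j ∈ Finset.range (l + 1 + 1),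
            mA q t (l + 1) * mcoef q t (l + 1) j * x ^ (2 * (j : ℤ) - (l : ℤ)))
          + ∑ j ∈ Finset.range (l + 1 + 1),
            mA q t (l + 1) * mcoef q t (l + 1) j * x ^ (2 * (j : ℤ) - (l : ℤ) - 2) := by
    rw [← Finset.sum_add_distrib]
    refine Finset.sum_congr rfl fun j hj => ?_
    have h1 : 2 * (j : ℤ) - ((l + 1 : ℕ) : ℤ) + 1 = 2 * (j : ℤ) - (l : ℤ) := by push_cast; ring
    have h2 : 2 * (j : ℤ) - ((l + 1 : ℕ) : ℤ) - 1 = 2 * (j : ℤ) - (l : ℤ) - 2 := by push_cast; ring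
    calc (x + x⁻¹) * (mA q t (l + 1) * (mcoef q t (l + 1) j * x ^ (2 * (j : ℤ) - ((l + 1 : ℕ) : ℤ))))
        = mA q t (l + 1) * mcoef q t (l + 1) j
            * ((x + x⁻¹) * x ^ (2 * (j : ℤ) - ((l + 1 : ℕ) : ℤ))) := by ring
      _ = _ := by rw [hx', h1, h2, mul_add]
  have hS1 :
      (∑ j ∈ Finset.range (l + 1 + 1),
          mA q t (l + 1) * mcoef q t (l + 1) j * x ^ (2 * (j : ℤ) - (l : ℤ)))
        = (∑ j ∈ Finset.range (l + 1),
            mA q t (l + 1) * mcoef q t (l + 1) j * x ^ (2 * (j : ℤ) - (l : ℤ)))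
          + x ^ ((l : ℤ) + 2) := by
    rw [Finset.sum_range_succ]
    congr 1
    have he : 2 * ((l + 1 : ℕ) : ℤ) - (l : ℤ) = (l : ℤ) + 2 := by push_cast; ring
    rw [he, bdryn q t (l + 1) (hqp _) (htp _), one_mul]
  have hS2 :
      (∑ j ∈ Finset.range (l + 1 + 1),
          mA q t (l + 1) * mcoef q t (l + 1) j * x ^ (2 * (j : ℤ) - (l : ℤ) - 2))
        = (∑ j ∈ Finset.range (l + 1),
            mA q t (l + 1) * mcoef q t (l + 1) (j + 1) * x ^ (2 * (j : ℤ) - (l : ℤ)))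
          + x ^ (-(l : ℤ) - 2) := by
    rw [Finset.sum_range_succ']
    congr 1
    · refine Finset.sum_congr rfl fun j hj => ?_
      have he : 2 * ((j + 1 : ℕ) : ℤ) - (l : ℤ) - 2 = 2 * (j : ℤ) - (l : ℤ) := by push_cast; ring
      rw [he]
    · have he : 2 * ((0 : ℕ) : ℤ) - (l : ℤ) - 2 = -(l : ℤ) - 2 := by push_cast; ring
      rw [he, bdry0 q t (l + 1) (hqp _) (htp _), one_mul]
  have hS3 :
      (∑ k ∈ Finset.range (l + 1 + 1 + 1),
          mA q t (l + 1 + 1) * (mcoef q t (l + 1 + 1) k * x ^ (2 * (k : ℤ) - ((l + 1 + 1 : ℕ) : ℤ))))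
        = ((∑ j ∈ Finset.range (l + 1),
            mA q t (l + 1 + 1) * mcoef q t (l + 1 + 1) (j + 1) * x ^ (2 * (j : ℤ) - (l : ℤ)))
          + x ^ (-(l : ℤ) - 2)) + x ^ ((l : ℤ) + 2) := by
    rw [Finset.sum_range_succ, Finset.sum_range_succ']
    congr 1
    · congr 1
      · refine Finset.sum_congr rfl fun j hj => ?_
        have he : 2 * ((j + 1 : ℕ) : ℤ) - ((l + 1 + 1 : ℕ) : ℤ) = 2 * (j : ℤ) - (l : ℤ) := by
          push_cast; ring
        rw [he]; ring
      · have he : 2 * ((0 : ℕ) : ℤ) - ((l + 1 + 1 : ℕ) : ℤ) = -(l : ℤ) - 2 := by push_cast; ring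
        rw [he, ← mul_assoc, bdry0 q t (l + 1 + 1) (hqp _) (htp _), one_mul]
    · have he : 2 * ((l + 1 + 1 : ℕ) : ℤ) - ((l + 1 + 1 : ℕ) : ℤ) = (l : ℤ) + 2 := by
        push_cast; ring
      rw [he, ← mul_assoc, bdryn q t (l + 1 + 1) (hqp _) (htp _), one_mul]
  have hmid : ∀ j ∈ Finset.range (l + 1),
      mA q t (l + 1) * mcoef q t (l + 1) j * x ^ (2 * (j : ℤ) - (l : ℤ))
          + mA q t (l + 1) * mcoef q t (l + 1) (j + 1) * x ^ (2 * (j : ℤ) - (l : ℤ))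
        = mA q t (l + 1 + 1) * mcoef q t (l + 1 + 1) (j + 1) * x ^ (2 * (j : ℤ) - (l : ℤ))
          + (1 - q ^ (2 * l + 2)) * (1 - q ^ (2 * l) * t ^ 4) /
              ((1 - q ^ (2 * l) * t ^ 2) * (1 - q ^ (2 * l + 2) * t ^ 2)) *
            (mA q t l * (mcoef q t l j * x ^ (2 * (j : ℤ) - (l : ℤ)))) := by
    intro j hj
    obtain ⟨d, hld⟩ : ∃ d, l = j + d := ⟨l - j, by have := Finset.mem_range.mp hj; omega⟩
    rw [hld]
    linear_combination x ^ (2 * (j : ℤ) - ((j + d : ℕ) : ℤ)) * midc q t j d hqp htp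
  have hmerge :
      (∑ j ∈ Finset.range (l + 1),
          mA q t (l + 1) * mcoef q t (l + 1) j * x ^ (2 * (j : ℤ) - (l : ℤ)))
        + (∑ j ∈ Finset.range (l + 1),
            mA q t (l + 1) * mcoef q t (l + 1) (j + 1) * x ^ (2 * (j : ℤ) - (l : ℤ)))
      = (∑ j ∈ Finset.range (l + 1),
          mA q t (l + 1 + 1) * mcoef q t (l + 1 + 1) (j + 1) * x ^ (2 * (j : ℤ) - (l : ℤ)))
        + ∑ j ∈ Finset.range (l + 1),
            (1 - q ^ (2 * l + 2)) * (1 - q ^ (2 * l) * t ^ 4) /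
                ((1 - q ^ (2 * l) * t ^ 2) * (1 - q ^ (2 * l + 2) * t ^ 2)) *
              (mA q t l * (mcoef q t l j * x ^ (2 * (j : ℤ) - (l : ℤ)))) := by
    rw [← Finset.sum_add_distrib, ← Finset.sum_add_distrib]
    exact Finset.sum_congr rfl hmid
  rw [hlhs, hS1, hS2, hS3]
  linear_combination hmerge
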